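/- arXiv:1304.6450 — 5 statements merged into one kernel-verified Lean document; each statement's English description precedes it below -/
import Mathlib

section
/- Let G be a finite cograph, i.e., a finite simple graph with no induced subgraph isomorphic to the path P₄ on four vertices. Then γ^i(G) equals the number of connected components of G. -/
/-- `A` dominates `B` in `G`: every vertex of `B` lies in the closed
neighborhood of some vertex of `A`. -/
def Dominates {V : Type*} (G : SimpleGraph V) (A B : Finset V) : Prop :=
  ∀ b ∈ B, ∃ a ∈ A, a = b ∨ G.Adj a b

/-- `γ_G(B)`: the minimum cardinality of a set of vertices dominating `B`. -/
noncomputable def domNum {V : Type*} (G : SimpleGraph V) (B : Finset V) : ℕ :=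
  sInf {n | ∃ A : Finset V, A.card = n ∧ Dominates G A B}

/-- The domination number `γ(G)`. -/
noncomputable def gamma {V : Type*} [Fintype V] (G : SimpleGraph V) : ℕ :=
  domNum G Finset.univ

/-- `A` is an independent set in `G`. -/
def IndepIn {V : Type*} (G : SimpleGraph V) (A : Finset V) : Prop :=
  ∀ x ∈ A, ∀ y ∈ A, ¬ G.Adj x y

/-- The independence-domination number `γ^i(G)`. -/
noncomputable def gammaI {V : Type*} (G : SimpleGraph V) : ℕ :=
  sSup {n | ∃ A : Finset V, IndepIn G A ∧ domNum G A = n}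

open SimpleGraph

/-- Four vertices with the path pattern of edges/non-edges give an induced `P₄`. -/
lemma P4_build {V : Type*} (G : SimpleGraph V) {x0 x1 x2 x3 : V}
    (h01 : G.Adj x0 x1) (h12 : G.Adj x1 x2) (h23 : G.Adj x2 x3)
    (n02 : ¬ G.Adj x0 x2) (n03 : ¬ G.Adj x0 x3) (n13 : ¬ G.Adj x1 x3)
    (d02 : x0 ≠ x2) (d03 : x0 ≠ x3) (d13 : x1 ≠ x3) :
    ∃ f : Fin 4 ↪ V, ∀ a b : Fin 4,
      G.Adj (f a) (f b) ↔ (SimpleGraph.pathGraph 4).Adj a b := by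
  have d01 : x0 ≠ x1 := G.ne_of_adj h01
  have d12 : x1 ≠ x2 := G.ne_of_adj h12
  have d23 : x2 ≠ x3 := G.ne_of_adj h23
  have n20 : ¬ G.Adj x2 x0 := fun h => n02 h.symm
  have n30 : ¬ G.Adj x3 x0 := fun h => n03 h.symm
  have n31 : ¬ G.Adj x3 x1 := fun h => n13 h.symm
  refine ⟨⟨![x0, x1, x2, x3], ?_⟩, ?_⟩
  · intro a b h
    fin_cases a <;> fin_cases b <;> simp_all
  · intro a b
    change G.Adj (![x0, x1, x2, x3] a) (![x0, x1, x2, x3] b) ↔ _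
    fin_cases a <;> fin_cases b <;>
      simp [pathGraph_adj, h01, h12, h23, h01.symm, h12.symm, h23.symm,
        n02, n03, n13, n20, n30, n31, G.irrefl] <;> decide

/-- In a `P₄`-free graph, two distinct non-adjacent reachable vertices
have a common neighbor. -/
lemma common_nbr {V : Type*} (G : SimpleGraph V)
    (hcograph : ¬ ∃ f : Fin 4 ↪ V, ∀ a b : Fin 4,
      G.Adj (f a) (f b) ↔ (SimpleGraph.pathGraph 4).Adj a b)
    {v a : V} (h : G.Reachable v a) : v ≠ a → ¬ G.Adj v a →
    ∃ w, G.Adj v w ∧ G.Adj w a := by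
  obtain ⟨p⟩ := h
  induction p with
  | nil => exact fun hne _ => absurd rfl hne
  | @cons u x y hux q ih =>
    intro hne hna
    by_cases hxa : x = y
    · exact absurd (hxa ▸ hux) hna
    by_cases hxadj : G.Adj x y
    · exact ⟨x, hux, hxadj⟩
    obtain ⟨w, hxw, hwa⟩ := ih hxa hxadj
    by_cases huw : G.Adj u w
    · exact ⟨w, huw, hwa⟩
    · exfalso
      refine hcograph (P4_build G hux hxw hwa huw hna hxadj ?_ hne hxa)
      rintro rfl; exact hna hwa

/-- In a `P₄`-free graph, the part of an independent set lying in a single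
connected component is dominated by a single vertex. -/
lemma exists_dominator {V : Type*} [Fintype V] (G : SimpleGraph V)
    (hcograph : ¬ ∃ f : Fin 4 ↪ V, ∀ a b : Fin 4,
      G.Adj (f a) (f b) ↔ (SimpleGraph.pathGraph 4).Adj a b)
    {A : Finset V} (hA : IndepIn G A) (C : G.ConnectedComponent)
    (hS : ∃ a ∈ A, G.connectedComponentMk a = C) :
    ∃ v, ∀ a ∈ A, G.connectedComponentMk a = C → (v = a ∨ G.Adj v a) := by
  classical
  set S : Finset V := A.filter (fun x => G.connectedComponentMk x = C) with hSdef
  have hSne : S.Nonempty := by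
    obtain ⟨a, haA, haC⟩ := hS
    exact ⟨a, Finset.mem_filter.mpr ⟨haA, haC⟩⟩
  set T : Finset V := Finset.univ.filter (fun v => G.connectedComponentMk v = C) with hTdef
  have hTne : T.Nonempty := by
    obtain ⟨a, ha⟩ := hSne
    exact ⟨a, Finset.mem_filter.mpr ⟨Finset.mem_univ _, (Finset.mem_filter.mp ha).2⟩⟩
  obtain ⟨v, hvT, hmax⟩ := T.exists_max_image
    (fun v => (S.filter (fun b => v = b ∨ G.Adj v b)).card) hTne
  have hvC : G.connectedComponentMk v = C := (Finset.mem_filter.mp hvT).2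
  refine ⟨v, ?_⟩
  by_contra hcon
  push_neg at hcon
  obtain ⟨a, haA, haC, hva, hvaAdj⟩ := hcon
  have haS : a ∈ S := Finset.mem_filter.mpr ⟨haA, haC⟩
  have hreach : G.Reachable v a := ConnectedComponent.exact (hvC.trans haC.symm)
  obtain ⟨w, hvw, hwa⟩ := common_nbr G hcograph hreach hva hvaAdj
  have hwT : w ∈ T := Finset.mem_filter.mpr ⟨Finset.mem_univ _,
    (ConnectedComponent.connectedComponentMk_eq_of_adj hvw).symm.trans hvC⟩
  have hb : ∃ b ∈ S, (v = b ∨ G.Adj v b) ∧ ¬ (w = b ∨ G.Adj w b) := by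
    by_contra hnb
    push_neg at hnb
    have hsub : S.filter (fun b => v = b ∨ G.Adj v b) ⊂
        S.filter (fun b => w = b ∨ G.Adj w b) := by
      constructor
      · intro b hbmem
        obtain ⟨hbS, hbp⟩ := Finset.mem_filter.mp hbmem
        exact Finset.mem_filter.mpr ⟨hbS, hnb b hbS hbp⟩
      · intro hsub'
        have : a ∈ S.filter (fun b => v = b ∨ G.Adj v b) :=
          hsub' (Finset.mem_filter.mpr ⟨haS, Or.inr hwa⟩)
        exact (not_or.mpr ⟨hva, hvaAdj⟩) (Finset.mem_filter.mp this).2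
    exact absurd (hmax w hwT) (not_le.mpr (Finset.card_lt_card hsub))
  obtain ⟨b, hbS, hbv, hbw⟩ := hb
  push_neg at hbw
  obtain ⟨hwb, hwbAdj⟩ := hbw
  have hvb : G.Adj v b := by
    rcases hbv with rfl | h
    · exact absurd hvw.symm hwbAdj
    · exact h
  have hbA : b ∈ A := (Finset.mem_filter.mp hbS).1
  have hba : ¬ G.Adj b a := hA b hbA a haA
  have hbna : b ≠ a := by
    rintro rfl; exact hvaAdj hvb
  exact hcograph (P4_build G hvb.symm hvw hwa
    (fun h => hwbAdj h.symm) hba hvaAdj (fun h => hwb h.symm) hbna hva)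

/-- Upper bound: any independent set is dominated by one vertex per component. -/
lemma domNum_le_card_components {V : Type*} [Fintype V] (G : SimpleGraph V)
    (hcograph : ¬ ∃ f : Fin 4 ↪ V, ∀ a b : Fin 4,
      G.Adj (f a) (f b) ↔ (SimpleGraph.pathGraph 4).Adj a b)
    {A : Finset V} (hA : IndepIn G A) :
    domNum G A ≤ Nat.card G.ConnectedComponent := by
  classical
  have hfin : Finite G.ConnectedComponent :=
    Finite.of_surjective (Quot.mk G.Reachable) (Quot.mk_surjective)
  have instF : Fintype G.ConnectedComponent := Fintype.ofFinite _
  set Cs : Finset G.ConnectedComponent := A.image G.connectedComponentMk with hCs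
  have hmem : ∀ C ∈ Cs, ∃ a ∈ A, G.connectedComponentMk a = C := by
    intro C hC
    exact Finset.mem_image.mp hC
  set D : Finset V := Cs.attach.image
    (fun C => (exists_dominator G hcograph hA C.1 (hmem C.1 C.2)).choose) with hD
  have hdom : Dominates G D A := by
    intro b hbA
    have hC : G.connectedComponentMk b ∈ Cs := Finset.mem_image_of_mem _ hbA
    refine ⟨(exists_dominator G hcograph hA _ (hmem _ hC)).choose,
      Finset.mem_image_of_mem _ (Finset.mem_attach _ ⟨_, hC⟩), ?_⟩
    exact (exists_dominator G hcograph hA _ (hmem _ hC)).choose_spec b hbA rfl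
  have h1 : domNum G A ≤ D.card := Nat.sInf_le ⟨D, rfl, hdom⟩
  have h2 : D.card ≤ Cs.card := by
    calc D.card ≤ Cs.attach.card := Finset.card_image_le
    _ = Cs.card := Finset.card_attach
  have h3 : Cs.card ≤ Fintype.card G.ConnectedComponent := Finset.card_le_univ _
  rw [Nat.card_eq_fintype_card]
  omega

/-- For a finite cograph (no induced `P₄`), `γ^i(G)` equals the number of
connected components of `G`. -/
theorem gammaI_cograph {V : Type*} [Fintype V] (G : SimpleGraph V)
    (hcograph : ¬ ∃ f : Fin 4 ↪ V, ∀ a b : Fin 4,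
      G.Adj (f a) (f b) ↔ (SimpleGraph.pathGraph 4).Adj a b) :
    gammaI G = Nat.card G.ConnectedComponent := by
  classical
  have hfin : Finite G.ConnectedComponent :=
    Finite.of_surjective (Quot.mk G.Reachable) (Quot.mk_surjective)
  have instF : Fintype G.ConnectedComponent := Fintype.ofFinite _
  set c : ℕ := Nat.card G.ConnectedComponent with hc
  -- the independent set of component representatives
  set Astar : Finset V := Finset.univ.image
    (fun C : G.ConnectedComponent => Quot.out C) with hAstar
  have hout : ∀ C : G.ConnectedComponent, G.connectedComponentMk (Quot.out C) = C :=
    fun C => Quot.out_eq C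
  have hAindep : IndepIn G Astar := by
    intro x hx y hy hadj
    obtain ⟨Cx, _, rfl⟩ := Finset.mem_image.mp hx
    obtain ⟨Cy, _, rfl⟩ := Finset.mem_image.mp hy
    have : Cx = Cy := by
      rw [← hout Cx, ← hout Cy]
      exact ConnectedComponent.connectedComponentMk_eq_of_adj hadj
    rw [this] at hadj
    exact G.irrefl hadj
  -- domNum of Astar equals c
  have hdomle : domNum G Astar ≤ c := domNum_le_card_components G hcograph hAindep
  have hdomge : c ≤ domNum G Astar := by
    have hne : {n | ∃ A : Finset V, A.card = n ∧ Dominates G A Astar}.Nonempty := by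
      refine ⟨Finset.univ.card, Finset.univ, rfl, ?_⟩
      intro b hb
      exact ⟨b, Finset.mem_univ b, Or.inl rfl⟩
    obtain ⟨D, hDcard, hDdom⟩ := Nat.sInf_mem hne
    rw [domNum, ← hDcard]
    have hch : ∀ C : G.ConnectedComponent, ∃ d ∈ D,
        d = Quot.out C ∨ G.Adj d (Quot.out C) := by
      intro C
      exact hDdom _ (Finset.mem_image_of_mem _ (Finset.mem_univ C))
    choose g hgD hg using hch
    have hgmk : ∀ C, G.connectedComponentMk (g C) = C := by
      intro C
      rcases hg C with h | h
      · rw [h]; exact hout C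
      · rw [ConnectedComponent.connectedComponentMk_eq_of_adj h]; exact hout C
    have hinj : Set.InjOn g (Finset.univ : Finset G.ConnectedComponent) := by
      intro C1 _ C2 _ h
      rw [← hgmk C1, ← hgmk C2, h]
    calc c = (Finset.univ : Finset G.ConnectedComponent).card := by
          rw [hc, Nat.card_eq_fintype_card, Finset.card_univ]
    _ ≤ D.card := Finset.card_le_card_of_injOn g (fun C _ => hgD C) hinj
  have hdomeq : domNum G Astar = c := le_antisymm hdomle hdomge
  -- conclude about the sSup
  have hmemS : c ∈ {n | ∃ A : Finset V, IndepIn G A ∧ domNum G A = n} :=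
    ⟨Astar, hAindep, hdomeq⟩
  have hub : ∀ n ∈ {n | ∃ A : Finset V, IndepIn G A ∧ domNum G A = n}, n ≤ c := by
    rintro n ⟨A, hAi, rfl⟩
    exact domNum_le_card_components G hcograph hAi
  exact le_antisymm (csSup_le ⟨c, hmemS⟩ hub) (le_csSup ⟨c, hub⟩ hmemS)
end

section
/- Let G=(V,E) be a finite simple graph and let M ⊆ V be an independent set such that every vertex of V \ M has at most two neighbors in M. Let H be the simple graph on vertex set M in which two distinct vertices x, y ∈ M are adjacent if and only if they have a common neighbor in V \ M (in G). Then the minimum cardinality of a set of vertices of G dominating M equals ν(H) + (|M| − 2ν(H)) = |M| − ν(H), where ν(H) is the maximum cardinality of a matching in H. -/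
/-- A matching in `H`: a set of pairwise disjoint edges of `H`. -/
def IsMatchingSet {V : Type*} (H : SimpleGraph V) (s : Finset (Sym2 V)) : Prop :=
  (∀ e ∈ s, e ∈ H.edgeSet) ∧
    ∀ e₁ ∈ s, ∀ e₂ ∈ s, e₁ ≠ e₂ → ∀ v : V, v ∈ e₁ → v ∉ e₂

/-- `ν(H)`: the maximum cardinality of a matching in `H`. -/
noncomputable def matchingNum {V : Type*} (H : SimpleGraph V) : ℕ :=
  sSup {n | ∃ s : Finset (Sym2 V), IsMatchingSet H s ∧ s.card = n}

lemma matching_subset {V : Type*} {H : SimpleGraph V} {s t : Finset (Sym2 V)}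
    (h : t ⊆ s) (hs : IsMatchingSet H s) : IsMatchingSet H t :=
  ⟨fun e he => hs.1 e (h he), fun e₁ h₁ e₂ h₂ hne v hv => hs.2 e₁ (h h₁) e₂ (h h₂) hne v hv⟩

lemma upper_aux {V : Type*} [DecidableEq V]
    (G : SimpleGraph V) (M : Finset V) (H : SimpleGraph V)
    (hH : ∀ x y : V, H.Adj x y ↔
      x ≠ y ∧ x ∈ M ∧ y ∈ M ∧ ∃ z : V, z ∉ M ∧ G.Adj z x ∧ G.Adj z y) :
    ∀ s : Finset (Sym2 V), IsMatchingSet H s →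
      ∀ B : Finset V, (∀ e ∈ s, ∀ v ∈ e, v ∈ B) →
      2 * s.card ≤ B.card ∧ ∃ A : Finset V, A.card + s.card ≤ B.card ∧ Dominates G A B := by
  intro s
  induction s using Finset.strongInduction with
  | _ s ih =>
    intro hs B hB
    rcases s.eq_empty_or_nonempty with rfl | ⟨e, he⟩
    · exact ⟨by simp, B, by simp, fun b hb => ⟨b, hb, Or.inl rfl⟩⟩
    · have heE : e ∈ H.edgeSet := hs.1 e he
      obtain ⟨x, y, rfl⟩ : ∃ x y, s(x, y) = e := by
        induction e using Sym2.ind with | _ x y => exact ⟨x, y, rfl⟩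
      rw [SimpleGraph.mem_edgeSet, hH] at heE
      obtain ⟨hxy, hxM, hyM, z, hzM, hzx, hzy⟩ := heE
      have hxB : x ∈ B := hB _ he x (by simp)
      have hyB : y ∈ B := hB _ he y (by simp)
      have hyB' : y ∈ B.erase x := Finset.mem_erase.mpr ⟨fun h => hxy h.symm, hyB⟩
      have hs' : IsMatchingSet H (s.erase s(x,y)) :=
        matching_subset (Finset.erase_subset _ _) hs
      have hB' : ∀ e' ∈ s.erase s(x,y), ∀ v ∈ e', v ∈ (B.erase x).erase y := by
        intro e' he' v hv
        obtain ⟨hne, he's⟩ := Finset.mem_erase.mp he'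
        have hnv : v ∉ s(x,y) := hs.2 e' he's _ he hne v hv
        refine Finset.mem_erase.mpr ⟨?_, Finset.mem_erase.mpr ⟨?_, hB _ he's v hv⟩⟩
        · rintro rfl; exact hnv (by simp)
        · rintro rfl; exact hnv (by simp)
      obtain ⟨h2, A', hA'c, hA'd⟩ := ih _ (Finset.erase_ssubset he) hs' _ hB'
      have hc1 := Finset.card_erase_of_mem hxB
      have hc2 := Finset.card_erase_of_mem hyB'
      have hc3 := Finset.card_erase_of_mem he
      have hp1 : 0 < B.card := Finset.card_pos.mpr ⟨x, hxB⟩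
      have hp2 : 0 < (B.erase x).card := Finset.card_pos.mpr ⟨y, hyB'⟩
      have hp3 : 0 < s.card := Finset.card_pos.mpr ⟨_, he⟩
      constructor
      · omega
      · refine ⟨insert z A', ?_, ?_⟩
        · have := Finset.card_insert_le z A'
          omega
        · intro b hb
          by_cases hbx : b = x
          · exact ⟨z, Finset.mem_insert_self _ _, Or.inr (hbx ▸ hzx)⟩
          by_cases hby : b = y
          · exact ⟨z, Finset.mem_insert_self _ _, Or.inr (hby ▸ hzy)⟩
          · obtain ⟨a, haA, hd⟩ := hA'd b
              (Finset.mem_erase.mpr ⟨hby, Finset.mem_erase.mpr ⟨hbx, hb⟩⟩)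
            exact ⟨a, Finset.mem_insert_of_mem haA, hd⟩

lemma lower_aux {V : Type*} [DecidableEq V]
    (G : SimpleGraph V) (M : Finset V) (H : SimpleGraph V)
    [DecidableRel G.Adj]
    (hM : IndepIn G M)
    (hdeg : ∀ v : V, v ∉ M → (M.filter (fun u => G.Adj v u)).card ≤ 2)
    (hH : ∀ x y : V, H.Adj x y ↔
      x ≠ y ∧ x ∈ M ∧ y ∈ M ∧ ∃ z : V, z ∉ M ∧ G.Adj z x ∧ G.Adj z y) :
    ∀ B : Finset V, B ⊆ M → ∀ A : Finset V, Dominates G A B →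
      ∃ s : Finset (Sym2 V), IsMatchingSet H s ∧ (∀ e ∈ s, ∀ v ∈ e, v ∈ B) ∧
        B.card ≤ s.card + A.card := by
  intro B
  induction B using Finset.strongInduction with
  | _ B ihB =>
    intro hBM A hA
    rcases B.eq_empty_or_nonempty with rfl | ⟨x, hx⟩
    · exact ⟨∅, ⟨by simp, by simp⟩, by simp, by simp⟩
    obtain ⟨a, haA, hax⟩ := hA x hx
    have hxM : x ∈ M := hBM hx
    have hApos : 0 < A.card := Finset.card_pos.mpr ⟨a, haA⟩
    have hcA := Finset.card_erase_of_mem haA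
    have hcBx := Finset.card_erase_of_mem hx
    have hBpos : 0 < B.card := Finset.card_pos.mpr ⟨x, hx⟩
    by_cases hy : ∃ y ∈ B, y ≠ x ∧ (a = y ∨ G.Adj a y)
    · obtain ⟨y, hyB, hyx, hay⟩ := hy
      have hyM : y ∈ M := hBM hyB
      have haM : a ∉ M := by
        intro haM
        rcases hax with rfl | hadj
        · rcases hay with rfl | hadj'
          · exact hyx rfl
          · exact hM a haM y hyM hadj'
        · exact hM a haM x hxM hadj
      have hax' : G.Adj a x := by
        rcases hax with rfl | h
        · exact absurd hxM haM
        · exact h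
      have hay' : G.Adj a y := by
        rcases hay with rfl | h
        · exact absurd hyM haM
        · exact h
      have hedge : H.Adj x y :=
        (hH x y).2 ⟨fun h => hyx h.symm, hxM, hyM, a, haM, hax', hay'⟩
      have hyBx : y ∈ B.erase x := Finset.mem_erase.mpr ⟨hyx, hyB⟩
      have hcBxy := Finset.card_erase_of_mem hyBx
      have hBxpos : 0 < (B.erase x).card := Finset.card_pos.mpr ⟨y, hyBx⟩
      have hss : (B.erase x).erase y ⊂ B :=
        Finset.ssubset_of_subset_of_ssubset (Finset.erase_subset _ _)
          (Finset.erase_ssubset hx)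
      have hdom' : Dominates G (A.erase a) ((B.erase x).erase y) := by
        intro b hb
        obtain ⟨hby, hb'⟩ := Finset.mem_erase.mp hb
        obtain ⟨hbx, hbB⟩ := Finset.mem_erase.mp hb'
        obtain ⟨a', ha', hd⟩ := hA b hbB
        refine ⟨a', Finset.mem_erase.mpr ⟨?_, ha'⟩, hd⟩
        rintro rfl
        rcases hd with rfl | hadj
        · exact haM (hBM hbB)
        · have h3 : ({x, y, b} : Finset V) ⊆ M.filter (fun u => G.Adj a' u) := by
            intro u hu
            simp only [Finset.mem_insert, Finset.mem_singleton] at hu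
            rcases hu with rfl | rfl | rfl
            · exact Finset.mem_filter.mpr ⟨hxM, hax'⟩
            · exact Finset.mem_filter.mpr ⟨hyM, hay'⟩
            · exact Finset.mem_filter.mpr ⟨hBM hbB, hadj⟩
          have hc3 : ({x, y, b} : Finset V).card = 3 := by
            rw [Finset.card_insert_of_notMem (by
                simp only [Finset.mem_insert, Finset.mem_singleton]
                push_neg
                exact ⟨Ne.symm hyx, Ne.symm hbx⟩),
              Finset.card_insert_of_notMem (by simpa using Ne.symm hby),
              Finset.card_singleton]
          have := Finset.card_le_card h3
          have := hdeg a' haM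
          omega
      obtain ⟨s', hs', hs'B, hcard⟩ :=
        ihB _ hss (fun v hv => hBM (Finset.mem_of_mem_erase (Finset.mem_of_mem_erase hv)))
          (A.erase a) hdom'
      have hnotmem : s(x, y) ∉ s' := by
        intro hmem
        have := hs'B _ hmem x (by simp)
        exact (Finset.mem_erase.mp (Finset.mem_of_mem_erase this)).1 rfl
      refine ⟨insert s(x, y) s', ⟨?_, ?_⟩, ?_, ?_⟩
      · intro e heI
        rcases Finset.mem_insert.mp heI with rfl | hes
        · exact hedge
        · exact hs'.1 e hes
      · intro e₁ h₁ e₂ h₂ hne v hv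
        rcases Finset.mem_insert.mp h₁ with rfl | h₁s <;>
          rcases Finset.mem_insert.mp h₂ with rfl | h₂s
        · exact absurd rfl hne
        · intro hv2
          have hvB := hs'B _ h₂s v hv2
          rcases Sym2.mem_iff.mp hv with rfl | rfl
          · exact (Finset.mem_erase.mp (Finset.mem_of_mem_erase hvB)).1 rfl
          · exact (Finset.mem_erase.mp hvB).1 rfl
        · have hvB := hs'B _ h₁s v hv
          intro hv2
          rcases Sym2.mem_iff.mp hv2 with rfl | rfl
          · exact (Finset.mem_erase.mp (Finset.mem_of_mem_erase hvB)).1 rfl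
          · exact (Finset.mem_erase.mp hvB).1 rfl
        · exact hs'.2 e₁ h₁s e₂ h₂s hne v hv
      · intro e heI v hv
        rcases Finset.mem_insert.mp heI with rfl | hes
        · rcases Sym2.mem_iff.mp hv with rfl | rfl
          · exact hx
          · exact hyB
        · exact Finset.mem_of_mem_erase (Finset.mem_of_mem_erase (hs'B _ hes v hv))
      · rw [Finset.card_insert_of_notMem hnotmem]
        omega
    · push_neg at hy
      have hdom' : Dominates G (A.erase a) (B.erase x) := by
        intro b hb
        obtain ⟨hbx, hbB⟩ := Finset.mem_erase.mp hb
        obtain ⟨a', ha', hd⟩ := hA b hbB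
        refine ⟨a', Finset.mem_erase.mpr ⟨?_, ha'⟩, hd⟩
        rintro rfl
        obtain ⟨h1, h2⟩ := hy b hbB hbx
        rcases hd with rfl | h
        · exact h1 rfl
        · exact h2 h
      obtain ⟨s', hs', hs'B, hcard⟩ :=
        ihB _ (Finset.erase_ssubset hx)
          (fun v hv => hBM (Finset.mem_of_mem_erase hv)) (A.erase a) hdom'
      exact ⟨s', hs', fun e hes v hv => Finset.mem_of_mem_erase (hs'B e hes v hv),
        by omega⟩

/-- Let `M` be an independent set such that every vertex outside `M` has at
most two neighbors in `M`, and let `H` be the graph on `M` joining two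
vertices iff they have a common neighbor outside `M`.  Then
`γ_G(M) = ν(H) + (|M| - 2ν(H)) = |M| - ν(H)`. -/
theorem domNum_eq_card_sub_matchingNum {V : Type*} [Fintype V] [DecidableEq V]
    (G : SimpleGraph V) [DecidableRel G.Adj] (M : Finset V)
    (hM : IndepIn G M)
    (hdeg : ∀ v : V, v ∉ M → (M.filter (fun u => G.Adj v u)).card ≤ 2)
    (H : SimpleGraph V)
    (hH : ∀ x y : V, H.Adj x y ↔
      x ≠ y ∧ x ∈ M ∧ y ∈ M ∧ ∃ z : V, z ∉ M ∧ G.Adj z x ∧ G.Adj z y) :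
    domNum G M = matchingNum H + (M.card - 2 * matchingNum H) ∧
      domNum G M = M.card - matchingNum H := by
  set S : Set ℕ := {n | ∃ s : Finset (Sym2 V), IsMatchingSet H s ∧ s.card = n} with hS
  have hSn : S.Nonempty := ⟨0, ∅, ⟨by simp, by simp⟩, by simp⟩
  have hSb : BddAbove S := by
    refine ⟨Fintype.card (Sym2 V), ?_⟩
    rintro n ⟨s, -, rfl⟩
    exact Finset.card_le_univ s
  have hν : matchingNum H ∈ S := Nat.sSup_mem hSn hSb
  obtain ⟨s, hs, hscard⟩ := hν
  have hcover : ∀ e ∈ s, ∀ v ∈ e, v ∈ M := by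
    intro e hes
    have heE := hs.1 e hes
    induction e using Sym2.ind with
    | _ a b =>
      intro v hv
      rw [SimpleGraph.mem_edgeSet, hH] at heE
      rcases Sym2.mem_iff.mp hv with rfl | rfl
      · exact heE.2.1
      · exact heE.2.2.1
  obtain ⟨h2ν, A, hAcard, hAdom⟩ := upper_aux G M H hH s hs M hcover
  have hupper : domNum G M ≤ M.card - matchingNum H := by
    have hmem : A.card ∈ {n | ∃ A : Finset V, A.card = n ∧ Dominates G A M} :=
      ⟨A, rfl, hAdom⟩
    have := Nat.sInf_le hmem
    rw [domNum]
    omega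
  have hDn : {n | ∃ A : Finset V, A.card = n ∧ Dominates G A M}.Nonempty :=
    ⟨M.card, M, rfl, fun b hb => ⟨b, hb, Or.inl rfl⟩⟩
  obtain ⟨A₀, hA₀card, hA₀dom⟩ : domNum G M ∈ _ := Nat.sInf_mem hDn
  obtain ⟨s', hs', -, hlow⟩ := lower_aux G M H hM hdeg hH M le_rfl A₀ hA₀dom
  have hs'le : s'.card ≤ matchingNum H := le_csSup hSb ⟨s', hs', rfl⟩
  have hlower : M.card ≤ matchingNum H + domNum G M := by omega
  omega
end

section
/- A finite simple graph G is a permutation graph if and only if both G and its complement are comparability graphs. Here G is a permutation graph if and only if there exist two linear orders ≤₁ and ≤₂ on the vertex set of G such that two distinct vertices x and y are adjacent in G exactly when ≤₁ and ≤₂ order them oppositely (i.e., x <₁ y and y <₂ x, or y <₁ x and x <₂ y). -/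
/-- `G` is a comparability graph: adjacency coincides with comparability in
some partial order on the vertex set. -/
def IsComparabilityGraph {V : Type*} (G : SimpleGraph V) : Prop :=
  ∃ r : V → V → Prop, IsPartialOrder V r ∧
    ∀ x y : V, G.Adj x y ↔ x ≠ y ∧ (r x y ∨ r y x)

/-- `G` is a permutation graph: there are two linear orders on the vertex set
such that two distinct vertices are adjacent exactly when the two orders
order them oppositely. -/
def IsPermutationGraph {V : Type*} (G : SimpleGraph V) : Prop :=
  ∃ r₁ r₂ : V → V → Prop, IsLinearOrder V r₁ ∧ IsLinearOrder V r₂ ∧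
    ∀ x y : V, G.Adj x y ↔ x ≠ y ∧ ((r₁ x y ∧ r₂ y x) ∨ (r₁ y x ∧ r₂ x y))

/-- Combining a partial order `P` with a partial order `Q` whose comparability
is exactly complementary to that of `P` yields a linear order. -/
lemma combine_isLinearOrder {V : Type*} (P Q : V → V → Prop)
    (hP : IsPartialOrder V P) (hQ : IsPartialOrder V Q)
    (hc : ∀ x y : V, x ≠ y → ((P x y ∨ P y x) ↔ ¬(Q x y ∨ Q y x))) :
    IsLinearOrder V (fun x y => x = y ∨ P x y ∨ Q x y) := by
  have Ptrans := hP.trans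
  have Qtrans := hQ.trans
  have Pantisymm := hP.antisymm
  have Qantisymm := hQ.antisymm
  refine { refl := fun a => Or.inl rfl, trans := ?_, antisymm := ?_, total := ?_ }
  case refine_1 =>
      rintro a b c (rfl | hab | hab) h2
      · exact h2
      all_goals rcases h2 with rfl | hbc | hbc
      · exact Or.inr (Or.inl hab)
      · exact Or.inr (Or.inl (Ptrans _ _ _ hab hbc))
      · -- P a b, Q b c
        by_cases hab' : a = b
        · exact Or.inr (Or.inr (hab' ▸ hbc))
        by_cases hbc' : b = c
        · exact Or.inr (Or.inl (hbc' ▸ hab))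
        by_cases hac : a = c
        · exact Or.inl hac
        have hnq : ¬(Q a b ∨ Q b a) := (hc a b hab').mp (Or.inl hab)
        have hnp : ¬(P b c ∨ P c b) := fun hp => (hc b c hbc').mp hp (Or.inl hbc)
        rcases Classical.em (P a c ∨ P c a) with (h | h) | h
        · exact Or.inr (Or.inl h)
        · exact absurd (Or.inr (Ptrans _ _ _ h hab)) hnp
        · rcases Classical.not_not.mp (fun hn => h ((hc a c hac).mpr hn)) with h' | h'
          · exact Or.inr (Or.inr h')
          · exact absurd (Or.inr (Qtrans _ _ _ hbc h')) hnq
      · exact Or.inr (Or.inr hab)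
      · -- Q a b, P b c is above; this is Q a b with P b c? order check below
        by_cases hab' : a = b
        · exact Or.inr (Or.inl (hab' ▸ hbc))
        by_cases hbc' : b = c
        · exact Or.inr (Or.inr (hbc' ▸ hab))
        by_cases hac : a = c
        · exact Or.inl hac
        have hnp : ¬(P a b ∨ P b a) := fun hp => (hc a b hab').mp hp (Or.inl hab)
        have hnq : ¬(Q b c ∨ Q c b) := (hc b c hbc').mp (Or.inl hbc)
        rcases Classical.em (P a c ∨ P c a) with (h | h) | h
        · exact Or.inr (Or.inl h)
        · exact absurd (Or.inr (Ptrans _ _ _ hbc h)) hnp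
        · rcases Classical.not_not.mp (fun hn => h ((hc a c hac).mpr hn)) with h' | h'
          · exact Or.inr (Or.inr h')
          · exact absurd (Or.inr (Qtrans _ _ _ h' hab)) hnq
      · exact Or.inr (Or.inr (Qtrans _ _ _ hab hbc))
  case refine_2 =>
      rintro a b (rfl | h1 | h1) h2
      · rfl
      all_goals rcases h2 with rfl | h2 | h2
      · rfl
      · exact Pantisymm _ _ h1 h2
      · by_contra hne; exact (hc a b hne).mp (Or.inl h1) (Or.inr h2)
      · rfl
      · by_contra hne; exact (hc a b hne).mp (Or.inr h2) (Or.inl h1)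
      · exact Qantisymm _ _ h1 h2
  case refine_3 =>
    intro a b
    by_cases hab : a = b
    · exact Or.inl (Or.inl hab)
    rcases Classical.em (P a b ∨ P b a) with h | h
    · rcases h with h | h
      · exact Or.inl (Or.inr (Or.inl h))
      · exact Or.inr (Or.inr (Or.inl h))
    · rcases Classical.not_not.mp (fun hn => h ((hc a b hab).mpr hn)) with h' | h'
      · exact Or.inl (Or.inr (Or.inr h'))
      · exact Or.inr (Or.inr (Or.inr h'))

/-- A finite graph is a permutation graph iff both it and its complement are
comparability graphs. -/
theorem isPermutationGraph_iff {V : Type*} [Fintype V] (G : SimpleGraph V) :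
    IsPermutationGraph G ↔ IsComparabilityGraph G ∧ IsComparabilityGraph Gᶜ := by
  constructor
  · rintro ⟨r₁, r₂, h₁, h₂, hadj⟩
    have t₁ := h₁.total
    have t₂ := h₂.total
    have a₁ := h₁.antisymm
    have a₂ := h₂.antisymm
    constructor
    · refine ⟨fun x y => x = y ∨ (r₁ x y ∧ r₂ y x), { refl := fun a => Or.inl rfl, trans := ?_, antisymm := ?_ }, ?_⟩
      · rintro a b c (rfl | ⟨h1, h2⟩) h'
        · exact h'
        rcases h' with rfl | ⟨h3, h4⟩
        · exact Or.inr ⟨h1, h2⟩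
        · exact Or.inr ⟨h₁.trans _ _ _ h1 h3, h₂.trans _ _ _ h4 h2⟩
      · rintro a b (rfl | ⟨h1, h2⟩) h'
        · rfl
        rcases h' with rfl | ⟨h3, h4⟩
        · rfl
        · exact a₁ _ _ h1 h3
      · intro x y
        rw [hadj x y]
        constructor
        · rintro ⟨hne, h | h⟩
          · exact ⟨hne, Or.inl (Or.inr h)⟩
          · exact ⟨hne, Or.inr (Or.inr h)⟩
        · rintro ⟨hne, (rfl | h) | (rfl | h)⟩
          · exact absurd rfl hne
          · exact ⟨hne, Or.inl h⟩
          · exact absurd rfl hne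
          · exact ⟨hne, Or.inr h⟩
    · refine ⟨fun x y => x = y ∨ (r₁ x y ∧ r₂ x y), { refl := fun a => Or.inl rfl, trans := ?_, antisymm := ?_ }, ?_⟩
      · rintro a b c (rfl | ⟨h1, h2⟩) h'
        · exact h'
        rcases h' with rfl | ⟨h3, h4⟩
        · exact Or.inr ⟨h1, h2⟩
        · exact Or.inr ⟨h₁.trans _ _ _ h1 h3, h₂.trans _ _ _ h2 h4⟩
      · rintro a b (rfl | ⟨h1, h2⟩) h'
        · rfl
        rcases h' with rfl | ⟨h3, h4⟩
        · rfl
        · exact a₁ _ _ h1 h3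
      · intro x y
        rw [SimpleGraph.compl_adj, hadj x y]
        constructor
        · rintro ⟨hne, hno⟩
          refine ⟨hne, ?_⟩
          rcases t₁ x y with u1 | u1 <;> rcases t₂ x y with u2 | u2
          · exact Or.inl (Or.inr ⟨u1, u2⟩)
          · exact absurd ⟨hne, Or.inl ⟨u1, u2⟩⟩ hno
          · exact absurd ⟨hne, Or.inr ⟨u1, u2⟩⟩ hno
          · exact Or.inr (Or.inr ⟨u1, u2⟩)
        · rintro ⟨hne, h⟩
          refine ⟨hne, ?_⟩
          rintro ⟨-, h' | h'⟩ <;>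
            rcases h with (rfl | ⟨h1, h2⟩) | (rfl | ⟨h1, h2⟩) <;>
            first
              | exact hne rfl
              | exact hne (a₁ _ _ h1 h'.1)
              | exact hne (a₁ _ _ h'.1 h1)
              | exact hne (a₂ _ _ h2 h'.2)
              | exact hne (a₂ _ _ h'.2 h2)
  · rintro ⟨⟨P, hP, hPadj⟩, ⟨Q, hQ, hQadj⟩⟩
    have hc : ∀ x y : V, x ≠ y → ((P x y ∨ P y x) ↔ ¬(Q x y ∨ Q y x)) := by
      intro x y hne
      have h1 := hPadj x y
      have h2 := hQadj x y
      rw [SimpleGraph.compl_adj] at h2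
      constructor
      · intro hp hq
        exact (h2.mpr ⟨hne, hq⟩).2 (h1.mpr ⟨hne, hp⟩)
      · intro hq
        by_contra hp
        exact hq (h2.mp ⟨hne, fun h => hp (h1.mp h).2⟩).2
    have hc' : ∀ x y : V, x ≠ y → ((P y x ∨ P x y) ↔ ¬(Q x y ∨ Q y x)) := by
      intro x y hne; rw [or_comm]; exact hc x y hne
    have hPflip : IsPartialOrder V (fun x y => P y x) :=
      { refl := fun a => hP.refl a, trans := fun a b c h h' => hP.trans _ _ _ h' h,
        antisymm := fun a b h h' => hP.antisymm _ _ h' h }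
    refine ⟨fun x y => x = y ∨ P x y ∨ Q x y, fun x y => x = y ∨ P y x ∨ Q x y,
      combine_isLinearOrder P Q hP hQ hc,
      combine_isLinearOrder (fun x y => P y x) Q hPflip hQ hc', ?_⟩
    intro x y
    rw [hPadj x y]
    constructor
    · rintro ⟨hne, h | h⟩
      · exact ⟨hne, Or.inl ⟨Or.inr (Or.inl h), Or.inr (Or.inl h)⟩⟩
      · exact ⟨hne, Or.inr ⟨Or.inr (Or.inl h), Or.inr (Or.inl h)⟩⟩
    · rintro ⟨hne, ⟨ha, hb⟩ | ⟨ha, hb⟩⟩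
      all_goals refine ⟨hne, ?_⟩
      · rcases ha with rfl | hP1 | hQ1
        · exact absurd rfl hne
        · exact Or.inl hP1
        · rcases hb with rfl | hP2 | hQ2
          · exact absurd rfl hne
          · exact Or.inl hP2
          · exact absurd (hQ.antisymm _ _ hQ1 hQ2) hne
      · rcases ha with rfl | hP1 | hQ1
        · exact absurd rfl hne
        · exact Or.inr hP1
        · rcases hb with rfl | hP2 | hQ2
          · exact absurd rfl hne
          · exact Or.inr hP2
          · exact absurd (hQ.antisymm _ _ hQ2 hQ1) hne
end

section
/- For all finite simple graphs G and H, the domination number of the Cartesian product satisfies γ(G □ H) ≥ γ^i(G) · γ(H). -/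
section Aux

open Finset

variable {V W : Type*}

lemma dominates_refl (G : SimpleGraph V) (B : Finset V) : Dominates G B B :=
  fun b hb => ⟨b, hb, Or.inl rfl⟩

lemma domNum_le_card (G : SimpleGraph V) {A B : Finset V} (h : Dominates G A B) :
    domNum G B ≤ A.card :=
  Nat.sInf_le ⟨A, rfl, h⟩

lemma exists_domset (G : SimpleGraph V) (B : Finset V) :
    ∃ A : Finset V, A.card = domNum G B ∧ Dominates G A B := by
  have hne : {n | ∃ A : Finset V, A.card = n ∧ Dominates G A B}.Nonempty :=
    ⟨B.card, B, rfl, dominates_refl G B⟩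
  exact Nat.sInf_mem hne

/-- Core counting lemma (abstract form of the Aharoni–Szabó argument). -/
lemma core [Fintype W] [DecidableEq V] [DecidableEq W]
    (G : SimpleGraph V) (H : SimpleGraph W) (A : Finset V) (Z : V → Finset W) :
    domNum G A * domNum H Finset.univ ≤
      (∑ a ∈ A, domNum H (Finset.univ \ Z a)) +
        ∑ w : W, domNum G (A.filter (fun a => w ∈ Z a)) := by
  classical
  obtain ⟨T, hTcard, hTdom⟩ := exists_domset H Finset.univ
  choose r hrT hradj using fun w => hTdom w (mem_univ w)
  set bad : V → Finset W := fun a => T.filter (fun t => ∀ w, r w = t → w ∉ Z a) with hbad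
  -- Claim 1 : (bad a).card ≤ domNum H (univ \ Z a)
  have claim1 : ∀ a : V, (bad a).card ≤ domNum H (Finset.univ \ Z a) := by
    intro a
    obtain ⟨S, hScard, hSdom⟩ := exists_domset H (Finset.univ \ Z a)
    have hdom : Dominates H (S ∪ (T \ bad a)) Finset.univ := by
      intro w _
      by_cases ht : r w ∈ bad a
      · have hw : w ∉ Z a := (mem_filter.1 ht).2 w rfl
        obtain ⟨v, hv, hvw⟩ := hSdom w (mem_sdiff.2 ⟨mem_univ w, hw⟩)
        exact ⟨v, mem_union_left _ hv, hvw⟩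
      · exact ⟨r w, mem_union_right _ (mem_sdiff.2 ⟨hrT w, ht⟩), hradj w⟩
    have h1 : domNum H Finset.univ ≤ S.card + (T.card - (bad a).card) := by
      calc domNum H Finset.univ ≤ (S ∪ (T \ bad a)).card := domNum_le_card H hdom
        _ ≤ S.card + (T \ bad a).card := card_union_le _ _
        _ = S.card + (T.card - (bad a).card) := by
            rw [card_sdiff_of_subset (filter_subset _ _)]
    have hbT : (bad a).card ≤ T.card := card_le_card (filter_subset _ _)
    omega
  -- choose optimal dominating sets for the layer sets
  choose C hCcard hCdom using fun w => exists_domset G (A.filter (fun a => w ∈ Z a))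
  -- Claim 2
  have claim2 : ∀ t ∈ T, domNum G A ≤
      (∑ w ∈ Finset.univ.filter (fun w => r w = t),
        domNum G (A.filter (fun a => w ∈ Z a)))
      + (A.filter (fun a => t ∈ bad a)).card := by
    intro t ht
    have hdom : Dominates G
        ((Finset.univ.filter (fun w => r w = t)).biUnion C ∪
          A.filter (fun a => t ∈ bad a)) A := by
      intro a ha
      by_cases h : ∃ w, r w = t ∧ w ∈ Z a
      · obtain ⟨w, hw1, hw2⟩ := h
        obtain ⟨v, hv, hva⟩ := hCdom w a (mem_filter.2 ⟨ha, hw2⟩)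
        exact ⟨v, mem_union_left _
          (mem_biUnion.2 ⟨w, mem_filter.2 ⟨mem_univ w, hw1⟩, hv⟩), hva⟩
      · push_neg at h
        refine ⟨a, mem_union_right _ (mem_filter.2 ⟨ha, ?_⟩), Or.inl rfl⟩
        exact mem_filter.2 ⟨ht, fun w hw => h w hw⟩
    calc domNum G A ≤ _ := domNum_le_card G hdom
      _ ≤ ((Finset.univ.filter (fun w => r w = t)).biUnion C).card +
            (A.filter (fun a => t ∈ bad a)).card := card_union_le _ _
      _ ≤ (∑ w ∈ Finset.univ.filter (fun w => r w = t), (C w).card) +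
            (A.filter (fun a => t ∈ bad a)).card := by
          gcongr
          exact card_biUnion_le
      _ = _ := by
          congr 1
          exact Finset.sum_congr rfl (fun w _ => hCcard w)
  -- sum over t ∈ T
  have hsum : T.card * domNum G A ≤
      (∑ w : W, domNum G (A.filter (fun a => w ∈ Z a))) + ∑ a ∈ A, (bad a).card := by
    calc T.card * domNum G A = ∑ _t ∈ T, domNum G A := by
          rw [Finset.sum_const, smul_eq_mul]
      _ ≤ ∑ t ∈ T, ((∑ w ∈ Finset.univ.filter (fun w => r w = t),
            domNum G (A.filter (fun a => w ∈ Z a)))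
            + (A.filter (fun a => t ∈ bad a)).card) := Finset.sum_le_sum claim2
      _ = (∑ t ∈ T, ∑ w ∈ Finset.univ.filter (fun w => r w = t),
            domNum G (A.filter (fun a => w ∈ Z a)))
            + ∑ t ∈ T, (A.filter (fun a => t ∈ bad a)).card := by
          rw [Finset.sum_add_distrib]
      _ = (∑ w : W, domNum G (A.filter (fun a => w ∈ Z a)))
            + ∑ a ∈ A, (bad a).card := by
          congr 1
          · exact Finset.sum_fiberwise_of_maps_to (fun w _ => hrT w) _
          · -- double counting
            calc ∑ t ∈ T, (A.filter (fun a => t ∈ bad a)).card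
                = ∑ t ∈ T, ∑ a ∈ A, (if t ∈ bad a then 1 else 0) := by
                  exact Finset.sum_congr rfl (fun t _ => Finset.card_filter _ _)
              _ = ∑ a ∈ A, ∑ t ∈ T, (if t ∈ bad a then 1 else 0) := Finset.sum_comm
              _ = ∑ a ∈ A, (bad a).card := by
                  refine Finset.sum_congr rfl (fun a _ => ?_)
                  rw [← Finset.card_filter]
                  congr 1
                  ext t
                  simp only [mem_filter, and_iff_right_iff_imp]
                  intro htb
                  exact (mem_filter.1 htb).1
  have hfinal : domNum G A * domNum H Finset.univ ≤
      (∑ w : W, domNum G (A.filter (fun a => w ∈ Z a))) + ∑ a ∈ A, (bad a).card := by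
    rw [mul_comm, ← hTcard]
    exact hsum
  calc domNum G A * domNum H Finset.univ ≤
      (∑ w : W, domNum G (A.filter (fun a => w ∈ Z a))) + ∑ a ∈ A, (bad a).card :=
        hfinal
    _ ≤ (∑ w : W, domNum G (A.filter (fun a => w ∈ Z a))) +
          ∑ a ∈ A, domNum H (Finset.univ \ Z a) := by
        gcongr with a _
        exact claim1 a
    _ = _ := by rw [add_comm]

end Aux

/-- For all finite graphs `G` and `H`, `γ(G □ H) ≥ γ^i(G) ⬝ γ(H)`. -/
theorem gamma_boxProd_ge {V W : Type*} [Fintype V] [Fintype W]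
    (G : SimpleGraph V) (H : SimpleGraph W) :
    gamma (G □ H) ≥ gammaI G * gamma H := by
  classical
  have hne : {n | ∃ A : Finset V, IndepIn G A ∧ domNum G A = n}.Nonempty := by
    refine ⟨domNum G (∅ : Finset V), ∅, ?_, rfl⟩
    intro x hx
    simp at hx
  have hbdd : BddAbove {n | ∃ A : Finset V, IndepIn G A ∧ domNum G A = n} := by
    refine ⟨Fintype.card V, ?_⟩
    rintro n ⟨A, _, rfl⟩
    have hdom : Dominates G Finset.univ A := fun a _ => ⟨a, Finset.mem_univ a, Or.inl rfl⟩
    simpa [Finset.card_univ] using domNum_le_card G hdom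
  obtain ⟨A, hAind, hAdom⟩ := Nat.sSup_mem hne hbdd
  obtain ⟨D, hDcard, hDdom⟩ := exists_domset (G □ H) Finset.univ
  set Z : V → Finset W :=
    fun a => Finset.univ.filter (fun w => ∃ g, G.Adj g a ∧ (g, w) ∈ D) with hZ
  set Col : V → Finset W := fun a => Finset.univ.filter (fun w => (a, w) ∈ D) with hCol
  set Lay : W → Finset V :=
    fun w => Finset.univ.filter (fun g => (g, w) ∈ D ∧ g ∉ A) with hLay
  have hmemCol : ∀ (a : V) (w : W), (a, w) ∈ D → w ∈ Col a := by
    intro a w h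
    simp only [hCol, Finset.mem_filter]
    exact ⟨Finset.mem_univ _, h⟩
  have hmemColD : ∀ (a : V) (w : W), w ∈ Col a → (a, w) ∈ D := by
    intro a w h
    simpa [hCol] using h
  have hmemLay : ∀ (w : W) (g : V), (g, w) ∈ D → g ∉ A → g ∈ Lay w := by
    intro w g h1 h2
    simp only [hLay, Finset.mem_filter]
    exact ⟨Finset.mem_univ _, h1, h2⟩
  -- vertical domination
  have F1 : ∀ a : V, Dominates H (Col a) (Finset.univ \ Z a) := by
    intro a b hb
    have hbz : ¬∃ g, G.Adj g a ∧ (g, b) ∈ D := by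
      have h := (Finset.mem_sdiff.1 hb).2
      simpa [hZ] using h
    obtain ⟨p, hpD, hp⟩ := hDdom (a, b) (Finset.mem_univ _)
    obtain ⟨p1, p2⟩ := p
    rcases hp with hp | hp
    · rw [Prod.mk.injEq] at hp
      obtain ⟨h1, h2⟩ := hp
      rw [h1] at hpD
      exact ⟨p2, hmemCol a p2 hpD, Or.inl h2⟩
    · rw [SimpleGraph.boxProd_adj] at hp
      rcases hp with ⟨hadj, heq⟩ | ⟨hadj, heq⟩
      · have heq' : p2 = b := heq
        have hadj' : G.Adj p1 a := hadj
        rw [heq'] at hpD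
        exact absurd ⟨p1, hadj', hpD⟩ hbz
      · have heq' : p1 = a := heq
        have hadj' : H.Adj p2 b := hadj
        rw [heq'] at hpD
        exact ⟨p2, hmemCol a p2 hpD, Or.inr hadj'⟩
  -- horizontal domination uses independence
  have F2 : ∀ w : W, Dominates G (Lay w) (A.filter (fun a => w ∈ Z a)) := by
    intro w a ha
    obtain ⟨haA, haZ⟩ := Finset.mem_filter.1 ha
    have haZ' : ∃ g, G.Adj g a ∧ (g, w) ∈ D := by simpa [hZ] using haZ
    obtain ⟨g, hgadj, hgD⟩ := haZ'
    have hgA : g ∉ A := fun hgA => hAind g hgA a haA hgadj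
    exact ⟨g, hmemLay w g hgD hgA, Or.inr hgadj⟩
  -- counting
  have count1 : ∑ a ∈ A, (Col a).card = (D.filter (fun p => p.1 ∈ A)).card := by
    rw [Finset.card_eq_sum_card_fiberwise
      (f := Prod.fst) (s := D.filter (fun p => p.1 ∈ A)) (t := A)
        (fun p hp => (Finset.mem_filter.1 (Finset.mem_coe.1 hp)).2)]
    refine Finset.sum_congr rfl (fun a haA => ?_)
    refine Finset.card_bij (fun w _ => (a, w)) ?_ ?_ ?_
    · intro w hw
      have hwD : (a, w) ∈ D := hmemColD a w hw
      simp [hwD, haA]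
    · intro w1 _ w2 _ h
      exact congrArg Prod.snd h
    · rintro ⟨g, w⟩ hp
      have h2 : g = a := by simpa using (Finset.mem_filter.1 hp).2
      subst h2
      have h1 : (g, w) ∈ D := by
        have := (Finset.mem_filter.1 (Finset.mem_filter.1 hp).1).1
        exact this
      exact ⟨w, hmemCol g w h1, rfl⟩
  have count2 : ∑ w : W, (Lay w).card = (D.filter (fun p => p.1 ∉ A)).card := by
    rw [Finset.card_eq_sum_card_fiberwise
      (f := Prod.snd) (t := Finset.univ) (fun p _ => Finset.mem_univ _)]
    refine Finset.sum_congr rfl (fun w _ => ?_)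
    refine Finset.card_bij (fun g _ => (g, w)) ?_ ?_ ?_
    · intro g hg
      have hg' : (g, w) ∈ D ∧ g ∉ A := by simpa [hLay] using hg
      simp [hg'.1, hg'.2]
    · intro g1 _ g2 _ h
      exact congrArg Prod.fst h
    · rintro ⟨g, w'⟩ hp
      have h2 : w' = w := by simpa using (Finset.mem_filter.1 hp).2
      subst h2
      have h1 : (g, w') ∈ D ∧ g ∉ A := by
        simpa using (Finset.mem_filter.1 (Finset.mem_filter.1 hp).1)
      exact ⟨g, hmemLay w' g h1.1 h1.2, rfl⟩
  have key := core G H A Z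
  have step1 : ∑ a ∈ A, domNum H (Finset.univ \ Z a) ≤ ∑ a ∈ A, (Col a).card :=
    Finset.sum_le_sum (fun a _ => domNum_le_card H (F1 a))
  have step2 : ∑ w : W, domNum G (A.filter (fun a => w ∈ Z a)) ≤
      ∑ w : W, (Lay w).card :=
    Finset.sum_le_sum (fun w _ => domNum_le_card G (F2 w))
  have hsplit : (D.filter (fun p => p.1 ∈ A)).card +
      (D.filter (fun p => p.1 ∉ A)).card = D.card :=
    Finset.card_filter_add_card_filter_not _
  have hmain : gammaI G * gamma H ≤ D.card := by
    calc gammaI G * gamma H = domNum G A * domNum H Finset.univ := by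
          rw [hAdom]; rfl
      _ ≤ (∑ a ∈ A, domNum H (Finset.univ \ Z a)) +
            ∑ w : W, domNum G (A.filter (fun a => w ∈ Z a)) := key
      _ ≤ (∑ a ∈ A, (Col a).card) + ∑ w : W, (Lay w).card :=
          Nat.add_le_add step1 step2
      _ = (D.filter (fun p => p.1 ∈ A)).card +
            (D.filter (fun p => p.1 ∉ A)).card := by rw [count1, count2]
      _ = D.card := hsplit
  calc gammaI G * gamma H ≤ D.card := hmain
    _ = gamma (G □ H) := hDcard
end

section
/- For all finite simple graphs G and H, γ(G □ H) ≥ (1/2)·γ(G)·γ(H) + (1/2)·min{γ(G), γ(H)}. -/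
open Finset

section SuenTarrAux

lemma ST_dominates_univ_univ {V : Type*} [Fintype V] (G : SimpleGraph V) :
    Dominates G (univ : Finset V) univ :=
  fun b _ => ⟨b, mem_univ b, Or.inl rfl⟩

lemma ST_gamma_spec {V : Type*} [Fintype V] (G : SimpleGraph V) :
    ∃ A : Finset V, A.card = gamma G ∧ Dominates G A univ := by
  have h : gamma G ∈ {n | ∃ A : Finset V, A.card = n ∧ Dominates G A univ} :=
    Nat.sInf_mem ⟨(univ : Finset V).card, univ, rfl, ST_dominates_univ_univ G⟩
  obtain ⟨A, hA, hdom⟩ := h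
  exact ⟨A, hA, hdom⟩

lemma ST_gamma_le_card {V : Type*} [Fintype V] (G : SimpleGraph V)
    {A : Finset V} (h : Dominates G A univ) : gamma G ≤ A.card :=
  Nat.sInf_le ⟨A, rfl, h⟩

/-- The one-sided Suen–Tarr dichotomy: either `2|D| ≥ γ(A)(γ(B)+1)`, or some vertex
of `A` has an empty column in `D`. -/
lemma ST_side {α β : Type*} [Fintype α] [Fintype β] (A : SimpleGraph α) (B : SimpleGraph β)
    (D : Finset (α × β)) (hD : Dominates (A □ B) D univ) :
    gamma A * (gamma B + 1) ≤ 2 * D.card ∨ ∃ u : α, ∀ b : β, (u, b) ∉ D := by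
  classical
  obtain ⟨U, hUcard, hUdom⟩ := ST_gamma_spec A
  -- a representative map: every vertex is assigned a dominator in U, fixing U pointwise
  have hrepex : ∀ g : α, ∃ u, u ∈ U ∧ (u = g ∨ A.Adj u g) := by
    intro g
    obtain ⟨u, hu, h⟩ := hUdom g (mem_univ g)
    exact ⟨u, hu, h⟩
  choose rp hrpU hrpdom using hrepex
  set rep : α → α := fun g => if g ∈ U then g else rp g with hrepdef
  have repU : ∀ g, rep g ∈ U := by
    intro g
    by_cases h : g ∈ U <;> simp [hrepdef, h, hrpU]
  have repdom : ∀ g, rep g = g ∨ A.Adj (rep g) g := by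
    intro g
    by_cases h : g ∈ U
    · simp [hrepdef, h]
    · simpa [hrepdef, h] using hrpdom g
  have repself : ∀ u ∈ U, rep u = u := by
    intro u hu; simp [hrepdef, hu]
  -- rows, blocks, projections, covered-row sets
  set row : β → Finset α := fun b => (D.filter fun q => q.2 = b).image Prod.fst with hrowdef
  set Dblk : α → Finset (α × β) := fun u => D.filter fun q => rep q.1 = u with hDblkdef
  set P : α → Finset β := fun u => (Dblk u).image Prod.snd with hPdef
  set covers : β → α → Prop :=
    fun b u => ∀ g : α, rep g = u → ∃ a ∈ row b, a = g ∨ A.Adj a g with hcoversdef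
  set Wst : α → Finset β := fun u => univ.filter fun b => covers b u with hWdef
  set c : α → ℕ := fun u => (Dblk u).card + (Wst u).card with hcdef
  -- if a row is far from the block projection, it fully covers the block horizontally
  have covers_far : ∀ u : α, ∀ b : β,
      (∀ p ∈ P u, ¬(p = b ∨ B.Adj p b)) → covers b u := by
    intro u b hb g hg
    obtain ⟨q, hqD, hqc⟩ := hD (g, b) (mem_univ _)
    rcases hqc with heq | hadj
    · refine ⟨g, ?_, Or.inl rfl⟩
      refine mem_image.2 ⟨q, mem_filter.2 ⟨hqD, ?_⟩, ?_⟩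
      · rw [heq]
      · rw [heq]
    · rw [SimpleGraph.boxProd_adj] at hadj
      rcases hadj with ⟨hA1, h2⟩ | ⟨hB1, h1⟩
      · exact ⟨q.1, mem_image.2 ⟨q, mem_filter.2 ⟨hqD, h2⟩, rfl⟩, Or.inr hA1⟩
      · exfalso
        refine hb q.2 ?_ (Or.inr hB1)
        refine mem_image.2 ⟨q, mem_filter.2 ⟨hqD, ?_⟩, rfl⟩
        rw [h1, hg]
  -- the block inequality with defect term
  have blockA : ∀ u : α, gamma B + (P u ∩ Wst u).card ≤ c u := by
    intro u
    set Wc : Finset β := univ.filter (fun b => ∀ p ∈ P u, ¬(p = b ∨ B.Adj p b)) with hWcdef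
    have hdom : Dominates B (P u ∪ Wc) univ := by
      intro b _
      by_cases h : ∃ p ∈ P u, p = b ∨ B.Adj p b
      · obtain ⟨p, hp, hcase⟩ := h
        exact ⟨p, mem_union_left _ hp, hcase⟩
      · have h' : ∀ p ∈ P u, ¬(p = b ∨ B.Adj p b) := by
          intro p hp hor
          exact h ⟨p, hp, hor⟩
        exact ⟨b, mem_union_right _ (mem_filter.2 ⟨mem_univ _, h'⟩), Or.inl rfl⟩
    have h1 : gamma B ≤ (P u).card + Wc.card :=
      le_trans (ST_gamma_le_card B hdom) (card_union_le _ _)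
    have hWcW : Wc ⊆ Wst u := by
      intro b hb
      exact mem_filter.2 ⟨mem_univ _, covers_far u b (mem_filter.1 hb).2⟩
    have hdisj : Disjoint Wc (P u ∩ Wst u) := by
      rw [disjoint_left]
      intro b hb hbP
      exact (mem_filter.1 hb).2 b (mem_inter.1 hbP).1 (Or.inl rfl)
    have h2 : Wc.card + (P u ∩ Wst u).card ≤ (Wst u).card := by
      rw [← card_union_of_disjoint hdisj]
      exact card_le_card (union_subset hWcW inter_subset_right)
    have h3 : (P u).card ≤ (Dblk u).card := card_image_le
    have : gamma B + (P u ∩ Wst u).card ≤ (P u).card + (Wc.card + (P u ∩ Wst u).card) := by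
      omega
    calc gamma B + (P u ∩ Wst u).card
        ≤ (P u).card + (Wc.card + (P u ∩ Wst u).card) := this
      _ ≤ (Dblk u).card + (Wst u).card := by omega
  -- the global ledger: ∑ c ≤ 2|D|
  have hDsum : ∑ u ∈ U, (Dblk u).card = D.card := by
    have := Finset.card_eq_sum_card_fiberwise (f := fun q : α × β => rep q.1)
      (s := D) (t := U) (fun q _ => repU q.1)
    exact this.symm
  have perrow : ∀ b : β,
      (U.filter fun u => covers b u).card ≤ (D.filter fun q => q.2 = b).card := by
    intro b
    have hdomS : Dominates A (row b ∪ U.filter fun u => ¬ covers b u) univ := by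
      intro g _
      by_cases h : covers b (rep g)
      · obtain ⟨a, ha, hcase⟩ := h g rfl
        exact ⟨a, mem_union_left _ ha, hcase⟩
      · exact ⟨rep g, mem_union_right _ (mem_filter.2 ⟨repU g, h⟩), repdom g⟩
    have h1 : gamma A ≤ (row b).card + (U.filter fun u => ¬ covers b u).card :=
      le_trans (ST_gamma_le_card A hdomS) (card_union_le _ _)
    have h2 : (U.filter fun u => covers b u).card
        + (U.filter fun u => ¬ covers b u).card = U.card :=
      card_filter_add_card_filter_not (p := fun u => covers b u)
    have h3 : (row b).card ≤ (D.filter fun q => q.2 = b).card := card_image_le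
    omega
  have hWsum : ∑ u ∈ U, (Wst u).card ≤ D.card := by
    have e1 : ∑ u ∈ U, (Wst u).card = ∑ b : β, (U.filter fun u => covers b u).card := by
      calc ∑ u ∈ U, (Wst u).card
          = ∑ u ∈ U, ∑ b : β, if covers b u then 1 else 0 := by
            refine Finset.sum_congr rfl fun u _ => ?_
            simp only [hWdef]
            rw [Finset.card_filter]
        _ = ∑ b : β, ∑ u ∈ U, if covers b u then 1 else 0 := Finset.sum_comm
        _ = ∑ b : β, (U.filter fun u => covers b u).card := by
            refine Finset.sum_congr rfl fun b _ => ?_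
            rw [Finset.card_filter]
    have e2 : ∑ b : β, (D.filter fun q => q.2 = b).card = D.card := by
      have := Finset.card_eq_sum_card_fiberwise (f := fun q : α × β => q.2)
        (s := D) (t := univ) (fun q _ => mem_univ q.2)
      exact this.symm
    calc ∑ u ∈ U, (Wst u).card
        = ∑ b : β, (U.filter fun u => covers b u).card := e1
      _ ≤ ∑ b : β, (D.filter fun q => q.2 = b).card :=
          Finset.sum_le_sum fun b _ => perrow b
      _ = D.card := e2
  have ledger : ∑ u ∈ U, c u ≤ 2 * D.card := by
    have : ∑ u ∈ U, c u = (∑ u ∈ U, (Dblk u).card) + ∑ u ∈ U, (Wst u).card := by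
      rw [← Finset.sum_add_distrib]
    rw [this, hDsum]
    omega
  -- the dichotomy
  by_cases hall : ∀ u ∈ U, gamma B + 1 ≤ c u
  · left
    have hsum : U.card • (gamma B + 1) ≤ ∑ u ∈ U, c u :=
      Finset.card_nsmul_le_sum U c _ hall
    rw [smul_eq_mul, hUcard] at hsum
    exact le_trans hsum ledger
  · right
    push_neg at hall
    obtain ⟨u, hu, hlt⟩ := hall
    have hble : c u ≤ gamma B := by omega
    have hinter : (P u ∩ Wst u) = ∅ := by
      have := blockA u
      have hcard : (P u ∩ Wst u).card = 0 := by omega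
      exact card_eq_zero.1 hcard
    refine ⟨u, fun b hb => ?_⟩
    -- hb : (u, b) ∈ D; derive b ∈ P u ∩ Wst u = ∅
    have hbP : b ∈ P u := by
      refine mem_image.2 ⟨(u, b), mem_filter.2 ⟨hb, ?_⟩, rfl⟩
      exact repself u hu
    have hurow : u ∈ row b := by
      exact mem_image.2 ⟨(u, b), mem_filter.2 ⟨hb, rfl⟩, rfl⟩
    have hbW : b ∈ Wst u := by
      refine mem_filter.2 ⟨mem_univ _, ?_⟩
      intro g hg
      refine ⟨u, hurow, ?_⟩
      rw [← hg]
      exact repdom g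
    have : b ∈ P u ∩ Wst u := mem_inter.2 ⟨hbP, hbW⟩
    rw [hinter] at this
    exact absurd this (notMem_empty b)

end SuenTarrAux

/-- Suen–Tarr bound: `γ(G □ H) ≥ ½ γ(G) γ(H) + ½ min {γ(G), γ(H)}`. -/
theorem gamma_boxProd_suen_tarr {V W : Type*} [Fintype V] [Fintype W]
    (G : SimpleGraph V) (H : SimpleGraph W) :
    (gamma (G □ H) : ℝ) ≥
      (1 / 2 : ℝ) * (gamma G : ℝ) * (gamma H : ℝ) +
        (1 / 2 : ℝ) * (min (gamma G) (gamma H) : ℝ) := by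
  classical
  obtain ⟨D, hDcard, hDdom⟩ := ST_gamma_spec (G □ H)
  set D' : Finset (W × V) := D.image Prod.swap with hD'def
  have hD'card : D'.card = D.card :=
    card_image_of_injective _ Prod.swap_injective
  have hD'dom : Dominates (H □ G) D' univ := by
    intro p _
    obtain ⟨q, hq, hc⟩ := hDdom (p.2, p.1) (mem_univ _)
    refine ⟨q.swap, mem_image_of_mem _ hq, ?_⟩
    rcases hc with h | h
    · left
      rw [h]
      exact Prod.ext rfl rfl
    · right
      rw [SimpleGraph.boxProd_adj] at h ⊢
      rcases h with ⟨h1, h2⟩ | ⟨h1, h2⟩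
      · exact Or.inr ⟨h1, h2⟩
      · exact Or.inl ⟨h1, h2⟩
  have key : gamma G * gamma H + min (gamma G) (gamma H) ≤ 2 * gamma (G □ H) := by
    rcases ST_side G H D hDdom with h1 | ⟨u₀, hu₀⟩
    · rw [hDcard] at h1
      calc gamma G * gamma H + min (gamma G) (gamma H)
          ≤ gamma G * gamma H + gamma G :=
            Nat.add_le_add_left (min_le_left _ _) _
        _ = gamma G * (gamma H + 1) := by ring
        _ ≤ 2 * gamma (G □ H) := h1
    · rcases ST_side H G D' hD'dom with h2 | ⟨v₀, hv₀⟩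
      · rw [hD'card, hDcard] at h2
        calc gamma G * gamma H + min (gamma G) (gamma H)
            ≤ gamma G * gamma H + gamma H :=
              Nat.add_le_add_left (min_le_right _ _) _
          _ = gamma H * (gamma G + 1) := by ring
          _ ≤ 2 * gamma (G □ H) := h2
      · exfalso
        obtain ⟨q, hq, hc⟩ := hDdom (u₀, v₀) (mem_univ _)
        rcases hc with h | h
        · exact hu₀ v₀ (h ▸ hq)
        · rw [SimpleGraph.boxProd_adj] at h
          rcases h with ⟨h1, h2⟩ | ⟨h1, h2⟩
          · -- q.2 = v₀ : the row of v₀ contains q, contradiction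
            refine hv₀ q.1 ?_
            rw [hD'def]
            refine mem_image.2 ⟨q, hq, ?_⟩
            rw [Prod.swap]
            exact Prod.ext (by exact h2) rfl
          · -- q.1 = u₀ : the column of u₀ contains q
            refine hu₀ q.2 ?_
            have : q = (u₀, q.2) := Prod.ext h2 rfl
            rw [← this]
            exact hq
  have hcast : ((gamma G * gamma H + min (gamma G) (gamma H) : ℕ) : ℝ)
      ≤ ((2 * gamma (G □ H) : ℕ) : ℝ) := Nat.cast_le.2 key
  push_cast at hcast
  rw [ge_iff_le]
  linarith
end
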